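/- For every Λ > 0 and M ≥ 0 there exist finite positive constants R = R(Λ,M) and C = C(Λ,M) with the following property: for every ℓ > R, every V ∈ C_c^∞((0,∞)) with sup_t |V(t)| ≤ M, every λ < Λ, and every twice continuously differentiable function φ : [0,ℓ] → ℝ, not identically zero, satisfying −φ″(t) + (t + V(t))φ(t) = λ φ(t) for all t ∈ (0,ℓ), φ(0) = 0, and either φ(ℓ) = 0 or φ′(ℓ) = 0, one has ∫_R^ℓ (φ′(t)² + φ(t)²) e^{t^{3/2}} dt ≤ C ∫_0^ℓ φ(t)² dt. -/

import Mathlib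

open Filter MeasureTheory Real Set Topology

noncomputable section

abbrev E2 := EuclideanSpace ℝ (Fin 2)

def IsTestFun2 (ω : Set E2) (ψ : E2 → ℝ) : Prop :=
  ContDiff ℝ (⊤ : ℕ∞) ψ ∧ HasCompactSupport ψ ∧ tsupport ψ ⊆ ω

def countN (h : ℝ) (W : E2 → ℝ) (ω : Set E2) (Λ : ℝ) : ℕ :=
  sSup {n : ℕ | ∃ M : Submodule ℝ (E2 → ℝ),
    Module.finrank ℝ M = n ∧
    (∀ ψ ∈ M, IsTestFun2 ω ψ) ∧
    (∀ ψ ∈ M, ψ ≠ 0 →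
      (∫ x in ω, (h ^ 2 * ‖fderiv ℝ ψ x‖ ^ 2 + W x * ψ x ^ 2))
        < Λ * ∫ x in ω, ψ x ^ 2)}

def rieszMean (γ h : ℝ) (W : E2 → ℝ) (ω : Set E2) (Λ : ℝ) : ℝ :=
  if γ = 0 then countN h W ω Λ
  else γ * ∫ E in Ioi (0:ℝ), (countN h W ω (Λ - E) : ℝ) * E ^ (γ - 1)

def IsTestFun1 (I : Set ℝ) (ψ : ℝ → ℝ) : Prop :=
  ContDiff ℝ (⊤ : ℕ∞) ψ ∧ HasCompactSupport ψ ∧ tsupport ψ ⊆ I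

def halfLineLevel (V : ℝ → ℝ) (k : ℕ) : ℝ :=
  sInf {c : ℝ | ∃ M : Submodule ℝ (ℝ → ℝ),
    Module.finrank ℝ M = k ∧
    (∀ ψ ∈ M, IsTestFun1 (Ioi 0) ψ) ∧
    (∀ ψ ∈ M,
      (∫ t in Ioi (0:ℝ), (deriv ψ t ^ 2 + (t + V t) * ψ t ^ 2))
        ≤ c * ∫ t in Ioi (0:ℝ), ψ t ^ 2)}

def airyZero (k : ℕ) : ℝ := halfLineLevel (fun _ => 0) k

def Lcl (γ : ℝ) (d : ℕ) : ℝ :=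
  Real.Gamma (γ + 1) / ((4 * π) ^ ((d : ℝ) / 2) * Real.Gamma (γ + 1 + d / 2))

def tangentVec (a : ℝ) : E2 := WithLp.toLp 2 ![-Real.sin a, Real.cos a]
def normalVec (a : ℝ) : E2 := WithLp.toLp 2 ![Real.cos a, Real.sin a]

structure StarkDomain where
  Ω : Set E2
  X₀ : E2
  δ : ℝ
  curve : ℝ → E2
  θ : ℝ → ℝ
  isOpen : IsOpen Ω
  bounded : Bornology.IsBounded Ω
  connected : IsConnected Ω
  X₀_mem : X₀ ∈ frontier Ω
  X₀_coord : X₀ 0 = 0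
  X₀_min : ∀ x ∈ closure Ω, X₀ 0 ≤ x 0
  X₀_uniq : ∀ x ∈ closure Ω, x 0 = X₀ 0 → x = X₀
  δ_pos : 0 < δ
  curve_smooth : ContDiffOn ℝ (⊤ : ℕ∞) curve (Ioo (-δ) δ)
  θ_smooth : ContDiffOn ℝ (⊤ : ℕ∞) θ (Ioo (-δ) δ)
  curve_zero : curve 0 = X₀
  curve_bdry : ∀ s ∈ Ioo (-δ) δ, curve s ∈ frontier Ω
  curve_deriv : ∀ s ∈ Ioo (-δ) δ, HasDerivAt curve (tangentVec (θ s)) s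
  curv_pos : 0 < deriv θ 0
  tau_inj : InjOn (fun p : ℝ × ℝ => curve p.1 - p.2 • normalVec (θ p.1))
    ((Ioo (-δ) δ) ×ˢ (Ioo 0 δ))
  tau_maps : ∀ p ∈ (Ioo (-δ) δ) ×ˢ (Ioo (0:ℝ) δ),
    curve p.1 - p.2 • normalVec (θ p.1) ∈ Ω

def StarkDomain.κ₀ (SD : StarkDomain) : ℝ := deriv SD.θ 0

def StarkDomain.τ (SD : StarkDomain) (s t : ℝ) : E2 :=
  SD.curve s - t • normalVec (SD.θ s)


private lemma key_ineq (X Y s m q t cc : ℝ) (hs0 : 0 ≤ s) (hss : s * s = t)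
    (hm1 : m ≤ 1) (hm0 : 0 ≤ m) (hq : t - cc ≤ q) (hc : 0 < cc) (htc : 8 * cc + 16 < t) :
    Y ^ 2 + X ^ 2 ≤ 5 * Y ^ 2 + 6 * s * X * Y + (5 * q - 9/8 * t - 3/8 * m) * X ^ 2 := by
  nlinarith [sq_nonneg (2 * Y + 3/2 * s * X),
    mul_nonneg (sub_nonneg.mpr hm1) (sq_nonneg X),
    mul_nonneg (sub_nonneg.mpr hq) (sq_nonneg X),
    mul_nonneg hc.le (sq_nonneg X), sq_nonneg X,
    mul_nonneg (le_of_lt (sub_pos.mpr htc)) (sq_nonneg X)]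

set_option maxHeartbeats 2000000 in
theorem stmt3 (Λ M : ℝ) (hΛ : 0 < Λ) (hM : 0 ≤ M) :
    ∃ R > (0:ℝ), ∃ C > (0:ℝ), ∀ ℓ : ℝ, R < ℓ →
      ∀ V : ℝ → ℝ, ContDiff ℝ (⊤ : ℕ∞) V → HasCompactSupport V →
        tsupport V ⊆ Set.Ioi 0 → (∀ t, |V t| ≤ M) →
      ∀ lam : ℝ, lam < Λ →
      ∀ φ : ℝ → ℝ, ContDiffOn ℝ 2 φ (Set.Icc 0 ℓ) →
        (∃ t ∈ Set.Icc (0:ℝ) ℓ, φ t ≠ 0) →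
        (∀ t ∈ Set.Ioo (0:ℝ) ℓ,
          -(derivWithin (fun u => derivWithin φ (Set.Icc 0 ℓ) u) (Set.Icc 0 ℓ) t)
              + (t + V t) * φ t = lam * φ t) →
        φ 0 = 0 →
        (φ ℓ = 0 ∨ derivWithin φ (Set.Icc 0 ℓ) ℓ = 0) →
        (∫ t in Set.Ioc R ℓ,
            (derivWithin φ (Set.Icc 0 ℓ) t ^ 2 + φ t ^ 2) * Real.exp (t ^ ((3:ℝ)/2)))
          ≤ C * ∫ t in Set.Ioc (0:ℝ) ℓ, φ t ^ 2 := by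
  have hc0 : (0:ℝ) < M + Λ := by linarith
  set c : ℝ := M + Λ with hcdef
  set R : ℝ := 8 * c + 16 with hRdef
  have hR0 : (0:ℝ) < R := by rw [hRdef]; linarith
  have hR16 : (16:ℝ) ≤ R := by rw [hRdef]; linarith
  refine ⟨R, hR0, Real.exp (R ^ ((3:ℝ)/2)) * ((3/4) * R ^ ((1:ℝ)/2) + 5/2), ?_, ?_⟩
  · have h := Real.exp_pos (R ^ ((3:ℝ)/2))
    have h2 : (0:ℝ) ≤ R ^ ((1:ℝ)/2) := Real.rpow_nonneg hR0.le _
    nlinarith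
  intro ℓ hℓR V hV _hVc _hVs hVM lam hlam φ hφ _hφne hode hφ0 hbc
  have hℓ0 : (0:ℝ) < ℓ := lt_trans hR0 hℓR
  have hD : UniqueDiffOn ℝ (Icc (0:ℝ) ℓ) := uniqueDiffOn_Icc hℓ0
  set φ' : ℝ → ℝ := derivWithin φ (Set.Icc 0 ℓ) with hφ'def
  set φ'' : ℝ → ℝ := derivWithin φ' (Set.Icc 0 ℓ) with hφ''def
  have hφ'1 : ContDiffOn ℝ 1 φ' (Icc 0 ℓ) := hφ.derivWithin hD (by norm_num)
  have hφc : ContinuousOn φ (Icc 0 ℓ) := hφ.continuousOn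
  have hφ'c : ContinuousOn φ' (Icc 0 ℓ) := hφ'1.continuousOn
  have hd1 : ∀ t ∈ Ioo (0:ℝ) ℓ, HasDerivAt φ (φ' t) t := by
    intro t ht
    exact ((hφ.differentiableOn (by norm_num) t (Ioo_subset_Icc_self ht)).hasDerivWithinAt).hasDerivAt
      (Icc_mem_nhds ht.1 ht.2)
  have hd2 : ∀ t ∈ Ioo (0:ℝ) ℓ, HasDerivAt φ' (φ'' t) t := by
    intro t ht
    exact ((hφ'1.differentiableOn (by norm_num) t (Ioo_subset_Icc_self ht)).hasDerivWithinAt).hasDerivAt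
      (Icc_mem_nhds ht.1 ht.2)
  have hODE : ∀ t ∈ Ioo (0:ℝ) ℓ, φ'' t = (t + V t - lam) * φ t := by
    intro t ht
    have h := hode t ht
    linear_combination -h
  have hqlow : ∀ t : ℝ, t - c ≤ t + V t - lam := by
    intro t
    have := (abs_le.mp (hVM t)).1
    rw [hcdef]; linarith
  -- the function u = φ² and its derivative w = 2 φ φ'
  set u : ℝ → ℝ := fun t => φ t ^ 2 with hudef
  set w : ℝ → ℝ := fun t => 2 * φ t * φ' t with hwdef
  have hdu : ∀ t ∈ Ioo (0:ℝ) ℓ, HasDerivAt u (w t) t := by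
    intro t ht
    have : HasDerivAt u (((2:ℕ):ℝ) * φ t ^ (2 - 1) * φ' t) t := (hd1 t ht).pow 2
    convert this using 1
    rw [hwdef]; push_cast; ring
  have hsub2 : Icc (R - 2) ℓ ⊆ Icc 0 ℓ := Icc_subset_Icc (by linarith) le_rfl
  have hsub2' : Ioo (R - 2) ℓ ⊆ Ioo 0 ℓ := Ioo_subset_Ioo (by linarith) le_rfl
  have hwc : ContinuousOn w (Icc (R-2) ℓ) :=
    (continuousOn_const.mul (hφc.mono hsub2)).mul (hφ'c.mono hsub2)
  have hdw : ∀ t ∈ Ioo (R-2:ℝ) ℓ, HasDerivAt w (2 * φ' t * φ' t + 2 * φ t * φ'' t) t := by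
    intro t ht
    have h := ((hd1 t (hsub2' ht)).const_mul 2).fun_mul (hd2 t (hsub2' ht))
    convert h using 1
    all_goals show 2 * φ t * φ' t = _ <;> ring
  have hwmono : MonotoneOn w (Icc (R-2) ℓ) := by
    apply monotoneOn_of_deriv_nonneg (convex_Icc _ _) hwc
    · rw [interior_Icc]
      intro t ht
      exact ((hdw t ht).differentiableAt).differentiableWithinAt
    · rw [interior_Icc]
      intro t ht
      rw [(hdw t ht).deriv, hODE t (hsub2' ht)]
      have h1 := hqlow t
      have ht1 : R - 2 < t := ht.1
      nlinarith [sq_nonneg (φ' t), sq_nonneg (φ t)]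
  have hwl : w ℓ = 0 := by
    show 2 * φ ℓ * φ' ℓ = 0
    rcases hbc with h | h <;> rw [h] <;> ring
  have hwnonpos : ∀ t ∈ Icc (R-2) ℓ, w t ≤ 0 := by
    intro t ht
    have := hwmono ht (⟨by linarith [ht.1, ht.2], le_rfl⟩ : ℓ ∈ Icc (R-2) ℓ) ht.2
    linarith [hwl ▸ this]
  have huanti : AntitoneOn u (Icc (R-2) R) := by
    apply antitoneOn_of_deriv_nonpos (convex_Icc _ _)
    · exact ((hφc.mono (hsub2.trans' (Icc_subset_Icc le_rfl hℓR.le))).pow 2)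
    · rw [interior_Icc]
      intro t ht
      have ht' : t ∈ Ioo (0:ℝ) ℓ := ⟨by linarith [ht.1], by linarith [ht.2]⟩
      exact ((hdu t ht').differentiableAt).differentiableWithinAt
    · rw [interior_Icc]
      intro t ht
      have ht' : t ∈ Ioo (0:ℝ) ℓ := ⟨by linarith [ht.1], by linarith [ht.2]⟩
      rw [(hdu t ht').deriv]
      exact hwnonpos t ⟨ht.1.le, by linarith [ht.2]⟩
  -- N and the bounds u(R-1) ≤ N, u R ≤ N, -(w R) ≤ N
  set N : ℝ := ∫ t in Set.Ioc (0:ℝ) ℓ, φ t ^ 2 with hNdef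
  have hN0 : 0 ≤ N := by
    rw [hNdef]
    exact setIntegral_nonneg measurableSet_Ioc (fun t _ => sq_nonneg _)
  have hu_int : IntegrableOn (fun t => φ t ^ 2) (Ioc 0 ℓ) volume :=
    ((hφc.pow 2).integrableOn_Icc).mono_set Ioc_subset_Icc_self
  have huN : u (R-1) ≤ N := by
    have hvol : (volume (Ioc (R-2) (R-1))).toReal = 1 := by
      rw [Real.volume_Ioc, show R-1-(R-2) = (1:ℝ) by ring, ENNReal.ofReal_one, ENNReal.toReal_one]
    have step1 : u (R-1) = ∫ _t in Ioc (R-2) (R-1), u (R-1) := by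
      rw [setIntegral_const, measureReal_def, hvol, one_smul]
    have step2 : (∫ _t in Ioc (R-2) (R-1), u (R-1)) ≤ ∫ t in Ioc (R-2) (R-1), φ t ^ 2 := by
      apply setIntegral_mono_on
      · exact integrableOn_const (measure_Ioc_lt_top).ne
      · exact hu_int.mono_set (Ioc_subset_Ioc (by linarith) (by linarith))
      · exact measurableSet_Ioc
      · intro t ht
        have := huanti (⟨ht.1.le, by linarith [ht.2]⟩ : t ∈ Icc (R-2) R)
          (⟨by linarith, by linarith⟩ : (R-1:ℝ) ∈ Icc (R-2) R) ht.2
        rw [hudef] at this ⊢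
        exact this
    have step3 : (∫ t in Ioc (R-2) (R-1), φ t ^ 2) ≤ N := by
      rw [hNdef]
      apply setIntegral_mono_set hu_int
      · exact Filter.Eventually.of_forall (fun t => sq_nonneg (φ t))
      · exact (Ioc_subset_Ioc (by linarith) (by linarith)).eventuallyLE
    linarith [step1 ▸ step2]
  have huR : u R ≤ N := by
    have := huanti (⟨by linarith, by linarith⟩ : (R-1:ℝ) ∈ Icc (R-2) R)
      (⟨by linarith, le_rfl⟩ : R ∈ Icc (R-2) R) (by linarith)
    linarith
  have hwN : -(w R) ≤ N := by
    obtain ⟨ξ, hξ, hslope⟩ := exists_hasDerivAt_eq_slope u w (by linarith : R-1 < R)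
      ((hφc.mono (Icc_subset_Icc (by linarith) hℓR.le)).pow 2)
      (fun x hx => hdu x ⟨by linarith [hx.1], by linarith [hx.2]⟩)
    rw [show R - (R-1) = (1:ℝ) by ring, div_one] at hslope
    have h1 : w ξ ≤ w R := hwmono
      (⟨by linarith [hξ.1], by linarith [hξ.2]⟩ : ξ ∈ Icc (R-2) ℓ)
      (⟨by linarith, hℓR.le⟩ : R ∈ Icc (R-2) ℓ) hξ.2.le
    have h2 : 0 ≤ u R := sq_nonneg _
    linarith [hslope ▸ h1]
  -- The main function G and its derivative g
  set G : ℝ → ℝ := fun t => Real.exp (t ^ ((3:ℝ)/2)) *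
      (5 * φ t * φ' t - 3/4 * t ^ ((1:ℝ)/2) * φ t ^ 2) with hGdef
  set g : ℝ → ℝ := fun t => Real.exp (t ^ ((3:ℝ)/2)) *
      (5 * φ' t ^ 2 + 6 * t ^ ((1:ℝ)/2) * φ t * φ' t +
        (5 * (t + V t - lam) - 9/8 * t - 3/8 * t ^ (-(1:ℝ)/2)) * φ t ^ 2) with hgdef
  have hGd : ∀ t ∈ Ioo R ℓ, HasDerivAt G (g t) t := by
    intro t ht
    have ht0 : (0:ℝ) < t := lt_trans hR0 ht.1
    have ht' : t ∈ Ioo (0:ℝ) ℓ := ⟨ht0, ht.2⟩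
    have hp32 : HasDerivAt (fun x : ℝ => x ^ ((3:ℝ)/2)) (3/2 * t ^ ((1:ℝ)/2)) t := by
      have h := Real.hasDerivAt_rpow_const (x := t) (p := (3:ℝ)/2) (Or.inl ht0.ne')
      rw [show (3:ℝ)/2 - 1 = (1:ℝ)/2 by norm_num] at h
      exact h
    have hp12 : HasDerivAt (fun x : ℝ => x ^ ((1:ℝ)/2)) (1/2 * t ^ (-(1:ℝ)/2)) t := by
      have h := Real.hasDerivAt_rpow_const (x := t) (p := (1:ℝ)/2) (Or.inl ht0.ne')
      rw [show (1:ℝ)/2 - 1 = -(1:ℝ)/2 by norm_num] at h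
      exact h
    have hexp : HasDerivAt (fun x : ℝ => Real.exp (x ^ ((3:ℝ)/2)))
        (Real.exp (t ^ ((3:ℝ)/2)) * (3/2 * t ^ ((1:ℝ)/2))) t := hp32.exp
    have hA : HasDerivAt (fun x => 5 * φ x * φ' x - 3/4 * x ^ ((1:ℝ)/2) * φ x ^ 2)
        ((5 * φ' t * φ' t + 5 * φ t * φ'' t) -
          ((3/4 * (1/2 * t ^ (-(1:ℝ)/2))) * φ t ^ 2 +
            3/4 * t ^ ((1:ℝ)/2) * (2 * φ t * φ' t))) t := by
      have h1 : HasDerivAt (fun x => 5 * φ x * φ' x) (5 * φ' t * φ' t + 5 * φ t * φ'' t) t := by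
        have h15 := ((hd1 t ht').const_mul 5).fun_mul (hd2 t ht')
        convert h15 using 1 <;> ring
      have h2 : HasDerivAt (fun x : ℝ => 3/4 * x ^ ((1:ℝ)/2) * φ x ^ 2)
          ((3/4 * (1/2 * t ^ (-(1:ℝ)/2))) * φ t ^ 2 +
            3/4 * t ^ ((1:ℝ)/2) * (2 * φ t * φ' t)) t := by
        have hsq : HasDerivAt (fun x => φ x ^ 2) (2 * φ t * φ' t) t := by
          have hp : HasDerivAt (fun x => φ x ^ 2) (((2:ℕ):ℝ) * φ t ^ (2 - 1) * φ' t) t := (hd1 t ht').pow 2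
          convert hp using 1 <;> (push_cast; ring)
        have hc34 := (hp12.const_mul (3/4 : ℝ)).fun_mul hsq
        convert hc34 using 1 <;> ring
      exact h1.sub h2
    have hcomb := hexp.fun_mul hA
    have hss : t ^ ((1:ℝ)/2) * t ^ ((1:ℝ)/2) = t := by
      rw [← Real.rpow_add ht0]; norm_num
    have hode' := hODE t ht'
    rw [hGdef, hgdef]
    refine hcomb.congr_deriv ?_; symm
    beta_reduce
    rw [hode']
    linear_combination ((9/8) * Real.exp (t ^ ((3:ℝ)/2)) * φ t ^ 2) * hss
  -- continuity facts on [R, ℓ]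
  have hsubRl : Icc R ℓ ⊆ Icc 0 ℓ := Icc_subset_Icc hR0.le le_rfl
  have hne : ∀ x ∈ Icc R ℓ, x ≠ 0 ∨ True := fun x hx => Or.inl (ne_of_gt (lt_of_lt_of_le hR0 hx.1))
  have hr12 : ContinuousOn (fun t : ℝ => t ^ ((1:ℝ)/2)) (Icc R ℓ) :=
    continuousOn_id.rpow_const (fun x hx => Or.inr (by norm_num))
  have hr32 : ContinuousOn (fun t : ℝ => t ^ ((3:ℝ)/2)) (Icc R ℓ) :=
    continuousOn_id.rpow_const (fun x hx => Or.inr (by norm_num))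
  have hrm12 : ContinuousOn (fun t : ℝ => t ^ (-(1:ℝ)/2)) (Icc R ℓ) :=
    continuousOn_id.rpow_const (fun x hx => Or.inl (ne_of_gt (lt_of_lt_of_le hR0 hx.1)))
  have hexpc : ContinuousOn (fun t : ℝ => Real.exp (t ^ ((3:ℝ)/2))) (Icc R ℓ) :=
    Real.continuous_exp.comp_continuousOn hr32
  have hφcR : ContinuousOn φ (Icc R ℓ) := hφc.mono hsubRl
  have hφ'cR : ContinuousOn φ' (Icc R ℓ) := hφ'c.mono hsubRl
  have hGc : ContinuousOn G (Icc R ℓ) := by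
    apply hexpc.mul
    exact ((continuousOn_const.mul hφcR).mul hφ'cR).sub
      ((continuousOn_const.mul hr12).mul (hφcR.pow 2))
  have hgc : ContinuousOn g (Icc R ℓ) := by
    apply hexpc.mul
    refine ContinuousOn.add (ContinuousOn.add ?_ ?_) ?_
    · exact continuousOn_const.mul (hφ'cR.pow 2)
    · exact ((continuousOn_const.mul hr12).mul hφcR).mul hφ'cR
    · refine ContinuousOn.mul ?_ (hφcR.pow 2)
      refine ContinuousOn.sub (ContinuousOn.sub ?_ ?_) ?_
      · exact continuousOn_const.mul
          (((continuousOn_id.add (hV.continuous.continuousOn)).sub continuousOn_const))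
      · exact continuousOn_const.mul continuousOn_id
      · exact continuousOn_const.mul hrm12
  have hgint : IntervalIntegrable g volume R ℓ := by
    apply ContinuousOn.intervalIntegrable
    rwa [uIcc_of_le hℓR.le]
  have hFTC : (∫ t in R..ℓ, g t) = G ℓ - G R :=
    intervalIntegral.integral_eq_sub_of_hasDeriv_right_of_le hℓR.le hGc
      (fun t ht => (hGd t ht).hasDerivWithinAt) hgint
  -- pointwise bound on Ioc R ℓ
  have hptwise : ∀ t ∈ Ioc R ℓ, (φ' t ^ 2 + φ t ^ 2) * Real.exp (t ^ ((3:ℝ)/2)) ≤ g t := by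
    intro t ht
    have htR : R < t := ht.1
    have ht0 : (0:ℝ) < t := lt_trans hR0 htR
    have hs0 : (0:ℝ) ≤ t ^ ((1:ℝ)/2) := Real.rpow_nonneg ht0.le _
    have hss : t ^ ((1:ℝ)/2) * t ^ ((1:ℝ)/2) = t := by
      rw [← Real.rpow_add ht0]; norm_num
    have hm1 : t ^ (-(1:ℝ)/2) ≤ 1 :=
      Real.rpow_le_one_of_one_le_of_nonpos (by linarith) (by norm_num)
    have hm0 : (0:ℝ) ≤ t ^ (-(1:ℝ)/2) := Real.rpow_nonneg ht0.le _
    have hqt : t - c ≤ t + V t - lam := hqlow t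
    have hexp0 : (0:ℝ) < Real.exp (t ^ ((3:ℝ)/2)) := Real.exp_pos _
    show (φ' t ^ 2 + φ t ^ 2) * Real.exp (t ^ ((3:ℝ)/2)) ≤
      Real.exp (t ^ ((3:ℝ)/2)) * (5 * φ' t ^ 2 + 6 * t ^ ((1:ℝ)/2) * φ t * φ' t +
        (5 * (t + V t - lam) - 9/8 * t - 3/8 * t ^ (-(1:ℝ)/2)) * φ t ^ 2)
    rw [mul_comm]
    apply mul_le_mul_of_nonneg_left ?_ hexp0.le
    have htRc : 8 * c + 16 < t := by rw [hRdef] at htR; linarith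
    exact key_ineq (φ t) (φ' t) _ _ _ _ _ hs0 hss hm1 hm0 hqt hc0 htRc
  -- G ℓ ≤ 0
  have hGl : G ℓ ≤ 0 := by
    have h0 : φ ℓ * φ' ℓ = 0 := by
      rcases hbc with h | h <;> rw [h] <;> ring
    have hs0 : (0:ℝ) ≤ ℓ ^ ((1:ℝ)/2) := Real.rpow_nonneg hℓ0.le _
    show Real.exp (ℓ ^ ((3:ℝ)/2)) * (5 * φ ℓ * φ' ℓ - 3/4 * ℓ ^ ((1:ℝ)/2) * φ ℓ ^ 2) ≤ 0
    have hbr : 5 * φ ℓ * φ' ℓ - 3/4 * ℓ ^ ((1:ℝ)/2) * φ ℓ ^ 2 ≤ 0 := by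
      nlinarith [mul_nonneg hs0 (sq_nonneg (φ ℓ))]
    have he := Real.exp_pos (ℓ ^ ((3:ℝ)/2))
    nlinarith
  -- integrability of the two integrands on Ioc R ℓ
  have hint1 : IntegrableOn (fun t => (φ' t ^ 2 + φ t ^ 2) * Real.exp (t ^ ((3:ℝ)/2)))
      (Ioc R ℓ) volume := by
    apply (ContinuousOn.integrableOn_Icc ?_).mono_set Ioc_subset_Icc_self
    exact ((hφ'cR.pow 2).add (hφcR.pow 2)).mul hexpc
  have hint2 : IntegrableOn g (Ioc R ℓ) volume :=
    (hgc.integrableOn_Icc).mono_set Ioc_subset_Icc_self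
  -- final chain
  have main : (∫ t in Set.Ioc R ℓ, (φ' t ^ 2 + φ t ^ 2) * Real.exp (t ^ ((3:ℝ)/2)))
      ≤ G ℓ - G R := by
    calc (∫ t in Set.Ioc R ℓ, (φ' t ^ 2 + φ t ^ 2) * Real.exp (t ^ ((3:ℝ)/2)))
        ≤ ∫ t in Set.Ioc R ℓ, g t :=
          setIntegral_mono_on hint1 hint2 measurableSet_Ioc hptwise
      _ = ∫ t in R..ℓ, g t := (intervalIntegral.integral_of_le hℓR.le).symm
      _ = G ℓ - G R := hFTC
  have hGR : -(G R) ≤ Real.exp (R ^ ((3:ℝ)/2)) * ((3/4) * R ^ ((1:ℝ)/2) + 5/2) * N := by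
    have hs0 : (0:ℝ) ≤ R ^ ((1:ℝ)/2) := Real.rpow_nonneg hR0.le _
    have huRN : φ R ^ 2 ≤ N := huR
    have hwRN : -(2 * φ R * φ' R) ≤ N := hwN
    have he := Real.exp_pos (R ^ ((3:ℝ)/2))
    have hbr : -(5 * φ R * φ' R - 3/4 * R ^ ((1:ℝ)/2) * φ R ^ 2)
        ≤ (3/4) * R ^ ((1:ℝ)/2) * N + 5/2 * N := by
      have h1 : 3/4 * R ^ ((1:ℝ)/2) * φ R ^ 2 ≤ 3/4 * R ^ ((1:ℝ)/2) * N :=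
        mul_le_mul_of_nonneg_left huRN (by positivity)
      nlinarith
    show -(Real.exp (R ^ ((3:ℝ)/2)) * (5 * φ R * φ' R - 3/4 * R ^ ((1:ℝ)/2) * φ R ^ 2))
      ≤ Real.exp (R ^ ((3:ℝ)/2)) * ((3/4) * R ^ ((1:ℝ)/2) + 5/2) * N
    calc -(Real.exp (R ^ ((3:ℝ)/2)) * (5 * φ R * φ' R - 3/4 * R ^ ((1:ℝ)/2) * φ R ^ 2))
        = Real.exp (R ^ ((3:ℝ)/2)) * (-(5 * φ R * φ' R - 3/4 * R ^ ((1:ℝ)/2) * φ R ^ 2)) := by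
          ring
      _ ≤ Real.exp (R ^ ((3:ℝ)/2)) * ((3/4) * R ^ ((1:ℝ)/2) * N + 5/2 * N) :=
          mul_le_mul_of_nonneg_left hbr he.le
      _ = Real.exp (R ^ ((3:ℝ)/2)) * ((3/4) * R ^ ((1:ℝ)/2) + 5/2) * N := by ring
  calc (∫ t in Set.Ioc R ℓ, (φ' t ^ 2 + φ t ^ 2) * Real.exp (t ^ ((3:ℝ)/2)))
      ≤ G ℓ - G R := main
    _ ≤ -(G R) := by linarith
    _ ≤ Real.exp (R ^ ((3:ℝ)/2)) * ((3/4) * R ^ ((1:ℝ)/2) + 5/2) * N := hGR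


end
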